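/- For every natural number n, the number of pairs (x, y) with x < 2^n, y < 2^n satisfying at least one of x XOR y = x + y, (x XOR y : ℤ) = (x : ℤ) − (y : ℤ), or (x XOR y : ℤ) = (y : ℤ) − (x : ℤ) is exactly 3·3^n − 3·2^n + 1. -/

import Mathlib

open Finset

lemma add_two_pow_eq_xor {n x : ℕ} (hx : x < 2 ^ n) : x + 2 ^ n = x ^^^ 2 ^ n := by
  apply Nat.eq_of_testBit_eq
  intro i
  rcases lt_trichotomy i n with h | h | h
  · rw [Nat.add_comm, Nat.testBit_two_pow_add_gt h, Nat.testBit_xor,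
      Nat.testBit_two_pow_of_ne h.ne', Bool.xor_false]
  · subst h
    rw [Nat.add_comm, Nat.testBit_two_pow_add_eq, Nat.testBit_xor,
      Nat.testBit_two_pow_self, Nat.testBit_lt_two_pow hx]
    rfl
  · have h1 : x + 2 ^ n < 2 ^ i := by
      calc x + 2 ^ n < 2 ^ n + 2 ^ n := by omega
      _ = 2 ^ (n + 1) := by ring
      _ ≤ 2 ^ i := Nat.pow_le_pow_right (by norm_num) h
    rw [Nat.testBit_lt_two_pow h1, Nat.testBit_xor,
      Nat.testBit_lt_two_pow (lt_of_lt_of_le hx (Nat.pow_le_pow_right (by norm_num) h.le)),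
      Nat.testBit_two_pow_of_ne h.ne, Bool.xor_false]

lemma xor_add_two_pow_left {n x y : ℕ} (hx : x < 2 ^ n) (hy : y < 2 ^ n) :
    (x + 2 ^ n) ^^^ y = (x ^^^ y) + 2 ^ n := by
  rw [add_two_pow_eq_xor hx, Nat.xor_assoc, Nat.xor_comm (2 ^ n) y, ← Nat.xor_assoc,
    ← add_two_pow_eq_xor (Nat.xor_lt_two_pow hx hy)]

lemma xor_add_two_pow_right {n x y : ℕ} (hx : x < 2 ^ n) (hy : y < 2 ^ n) :
    x ^^^ (y + 2 ^ n) = (x ^^^ y) + 2 ^ n := by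
  rw [Nat.xor_comm, xor_add_two_pow_left hy hx, Nat.xor_comm]

lemma xor_add_two_pow_both {n x y : ℕ} (hx : x < 2 ^ n) (hy : y < 2 ^ n) :
    (x + 2 ^ n) ^^^ (y + 2 ^ n) = x ^^^ y := by
  rw [add_two_pow_eq_xor hx, add_two_pow_eq_xor hy, Nat.xor_assoc, Nat.xor_comm (2 ^ n),
    Nat.xor_assoc, Nat.xor_self, Nat.xor_zero]

def SA (n : ℕ) : Finset (ℕ × ℕ) :=
  (Finset.range (2 ^ n) ×ˢ Finset.range (2 ^ n)).filter (fun p => p.1 ^^^ p.2 = p.1 + p.2)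

lemma SA_succ (n : ℕ) : SA (n + 1) =
    (SA n ∪ (SA n).image (fun p => (p.1 + 2 ^ n, p.2))) ∪
      (SA n).image (fun p => (p.1, p.2 + 2 ^ n)) := by
  have h2 : 2 ^ (n + 1) = 2 ^ n + 2 ^ n := by ring
  ext ⟨x, y⟩
  simp only [SA, mem_filter, mem_product, mem_range, mem_union, mem_image, Prod.mk.injEq,
    Prod.exists]
  constructor
  · rintro ⟨⟨hx, hy⟩, hcond⟩
    rcases lt_or_ge x (2 ^ n) with hx' | hx' <;> rcases lt_or_ge y (2 ^ n) with hy' | hy'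
    · exact Or.inl (Or.inl ⟨⟨hx', hy'⟩, hcond⟩)
    · -- y ≥ 2^n
      right
      obtain ⟨y', rfl⟩ : ∃ y', y = y' + 2 ^ n := ⟨y - 2 ^ n, by omega⟩
      have hy'' : y' < 2 ^ n := by omega
      refine ⟨x, y', ⟨⟨⟨hx', hy''⟩, ?_⟩, rfl, rfl⟩⟩
      have := xor_add_two_pow_right hx' hy''
      omega
    · left; right
      obtain ⟨x', rfl⟩ : ∃ x', x = x' + 2 ^ n := ⟨x - 2 ^ n, by omega⟩
      have hx'' : x' < 2 ^ n := by omega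
      refine ⟨x', y, ⟨⟨⟨hx'', hy'⟩, ?_⟩, rfl, rfl⟩⟩
      have := xor_add_two_pow_left hx'' hy'
      omega
    · exfalso
      obtain ⟨x', rfl⟩ : ∃ x', x = x' + 2 ^ n := ⟨x - 2 ^ n, by omega⟩
      obtain ⟨y', rfl⟩ : ∃ y', y = y' + 2 ^ n := ⟨y - 2 ^ n, by omega⟩
      have hx'' : x' < 2 ^ n := by omega
      have hy'' : y' < 2 ^ n := by omega
      have h3 := xor_add_two_pow_both hx'' hy''
      have h4 : x' ^^^ y' < 2 ^ n := Nat.xor_lt_two_pow hx'' hy''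
      omega
  · rintro ((⟨⟨hx, hy⟩, hcond⟩ | ⟨a, b, ⟨⟨ha, hb⟩, hab⟩, hx, hy⟩) | ⟨a, b, ⟨⟨ha, hb⟩, hab⟩, hx, hy⟩)
    · exact ⟨⟨by omega, by omega⟩, hcond⟩
    · subst hx; subst hy
      have := xor_add_two_pow_left ha hb
      exact ⟨⟨by omega, by omega⟩, by omega⟩
    · subst hx; subst hy
      have := xor_add_two_pow_right ha hb
      exact ⟨⟨by omega, by omega⟩, by omega⟩

lemma SA_mem_lt {n : ℕ} {p : ℕ × ℕ} (hp : p ∈ SA n) : p.1 < 2 ^ n ∧ p.2 < 2 ^ n := by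
  simp only [SA, mem_filter, mem_product, mem_range] at hp
  exact hp.1

lemma card_SA (n : ℕ) : (SA n).card = 3 ^ n := by
  induction n with
  | zero => decide
  | succ n ih =>
    rw [SA_succ]
    rw [card_union_of_disjoint, card_union_of_disjoint]
    · rw [card_image_of_injective _ (fun p q h => by
        simpa [Prod.ext_iff] using h),
        card_image_of_injective _ (fun p q h => by
        simpa [Prod.ext_iff] using h), ih]
      ring
    · rw [disjoint_left]
      intro p hp hq
      simp only [mem_image] at hq
      obtain ⟨q, hq, rfl⟩ := hq
      have := (SA_mem_lt hp).1
      have := (SA_mem_lt hq).1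
      simp at *
    · rw [disjoint_left]
      intro p hp hq
      simp only [mem_image] at hq
      obtain ⟨q, hq', rfl⟩ := hq
      have h2 := (SA_mem_lt hq').2
      rcases (mem_union.mp hp) with hp | hp
      · have := (SA_mem_lt hp).2
        simp at this
      · simp only [mem_image] at hp
        obtain ⟨r, hr, hre⟩ := hp
        have := (SA_mem_lt hr).2
        have h3 : r.2 = q.2 + 2 ^ n := by
          have := congrArg Prod.snd hre
          simpa using this
        omega

lemma card_B (n : ℕ) :
    ((Finset.range (2 ^ n) ×ˢ Finset.range (2 ^ n)).filter
      (fun p => ((p.1 ^^^ p.2 : ℕ) : ℤ) = (p.1 : ℤ) - (p.2 : ℤ))).card = 3 ^ n := by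
  rw [← card_SA n]
  apply Finset.card_bij (fun p _ => (p.1 ^^^ p.2, p.2))
  · rintro ⟨x, y⟩ hp
    simp only [mem_filter, mem_product, mem_range] at hp
    obtain ⟨⟨hx, hy⟩, hcond⟩ := hp
    have hxy : x ^^^ y < 2 ^ n := Nat.xor_lt_two_pow hx hy
    simp only [SA, mem_filter, mem_product, mem_range]
    refine ⟨⟨hxy, hy⟩, ?_⟩
    rw [xor_cancel_right]
    omega
  · rintro ⟨x, y⟩ ha ⟨x', y'⟩ hb h
    simp only [Prod.mk.injEq] at h ⊢
    obtain ⟨h1, h2⟩ := h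
    subst h2
    exact ⟨(Nat.xor_left_inj).mp h1, rfl⟩
  · rintro ⟨d, y⟩ hq
    simp only [SA, mem_filter, mem_product, mem_range] at hq
    obtain ⟨⟨hd, hy⟩, hcond⟩ := hq
    refine ⟨(d ^^^ y, y), ?_, ?_⟩
    · simp only [mem_filter, mem_product, mem_range]
      have h1 : d ^^^ y < 2 ^ n := Nat.xor_lt_two_pow hd hy
      refine ⟨⟨h1, hy⟩, ?_⟩
      rw [xor_cancel_right]
      omega
    · simp [xor_cancel_right]

lemma card_C (n : ℕ) :
    ((Finset.range (2 ^ n) ×ˢ Finset.range (2 ^ n)).filter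
      (fun p => ((p.1 ^^^ p.2 : ℕ) : ℤ) = (p.2 : ℤ) - (p.1 : ℤ))).card = 3 ^ n := by
  rw [← card_SA n]
  apply Finset.card_bij (fun p _ => (p.1 ^^^ p.2, p.1))
  · rintro ⟨x, y⟩ hp
    simp only [mem_filter, mem_product, mem_range] at hp
    obtain ⟨⟨hx, hy⟩, hcond⟩ := hp
    have hxy : x ^^^ y < 2 ^ n := Nat.xor_lt_two_pow hx hy
    simp only [SA, mem_filter, mem_product, mem_range]
    refine ⟨⟨hxy, hx⟩, ?_⟩
    rw [Nat.xor_comm, xor_cancel_left]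
    omega
  · rintro ⟨x, y⟩ ha ⟨x', y'⟩ hb h
    simp only [Prod.mk.injEq] at h ⊢
    obtain ⟨h1, h2⟩ := h
    subst h2
    refine ⟨rfl, ?_⟩
    rw [Nat.xor_comm x y, Nat.xor_comm x y'] at h1
    exact (Nat.xor_left_inj).mp h1
  · rintro ⟨d, x⟩ hq
    simp only [SA, mem_filter, mem_product, mem_range] at hq
    obtain ⟨⟨hd, hx⟩, hcond⟩ := hq
    refine ⟨(x, x ^^^ d), ?_, ?_⟩
    · simp only [mem_filter, mem_product, mem_range]
      have h1 : x ^^^ d < 2 ^ n := Nat.xor_lt_two_pow hx hd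
      refine ⟨⟨hx, h1⟩, ?_⟩
      rw [xor_cancel_left]
      rw [Nat.xor_comm] at hcond
      omega
    · simp [xor_cancel_left]

lemma filter_AB (n : ℕ) :
    ((Finset.range (2 ^ n) ×ˢ Finset.range (2 ^ n)).filter
      (fun p => (p.1 ^^^ p.2 = p.1 + p.2) ∧
        ((p.1 ^^^ p.2 : ℕ) : ℤ) = (p.1 : ℤ) - (p.2 : ℤ))).card = 2 ^ n := by
  have he : ∀ p : ℕ × ℕ, ((p.1 ^^^ p.2 = p.1 + p.2) ∧
      ((p.1 ^^^ p.2 : ℕ) : ℤ) = (p.1 : ℤ) - (p.2 : ℤ)) ↔ p.2 = 0 := by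
    rintro ⟨x, y⟩
    constructor
    · rintro ⟨h1, h2⟩; omega
    · rintro h; simp only at h; subst h; simp
  rw [filter_congr (fun p _ => he p)]
  have : (Finset.range (2 ^ n) ×ˢ Finset.range (2 ^ n)).filter (fun p => p.2 = 0)
      = Finset.range (2 ^ n) ×ˢ {0} := by
    ext ⟨x, y⟩
    simp only [mem_filter, mem_product, mem_range, mem_singleton]
    constructor
    · rintro ⟨⟨hx, _⟩, h⟩; exact ⟨hx, h⟩
    · rintro ⟨hx, h⟩; exact ⟨⟨hx, by simp [h, Nat.pow_pos]⟩, h⟩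
  rw [this, card_product, card_singleton, card_range, mul_one]

lemma filter_AC (n : ℕ) :
    ((Finset.range (2 ^ n) ×ˢ Finset.range (2 ^ n)).filter
      (fun p => (p.1 ^^^ p.2 = p.1 + p.2) ∧
        ((p.1 ^^^ p.2 : ℕ) : ℤ) = (p.2 : ℤ) - (p.1 : ℤ))).card = 2 ^ n := by
  have he : ∀ p : ℕ × ℕ, ((p.1 ^^^ p.2 = p.1 + p.2) ∧
      ((p.1 ^^^ p.2 : ℕ) : ℤ) = (p.2 : ℤ) - (p.1 : ℤ)) ↔ p.1 = 0 := by
    rintro ⟨x, y⟩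
    constructor
    · rintro ⟨h1, h2⟩; omega
    · rintro h; simp only at h; subst h; simp
  rw [filter_congr (fun p _ => he p)]
  have : (Finset.range (2 ^ n) ×ˢ Finset.range (2 ^ n)).filter (fun p => p.1 = 0)
      = ({0} : Finset ℕ) ×ˢ Finset.range (2 ^ n) := by
    ext ⟨x, y⟩
    simp only [mem_filter, mem_product, mem_range, mem_singleton]
    constructor
    · rintro ⟨⟨_, hy⟩, h⟩; exact ⟨h, hy⟩
    · rintro ⟨h, hy⟩; exact ⟨⟨by simp [h, Nat.pow_pos], hy⟩, h⟩
  rw [this, card_product, card_singleton, card_range, one_mul]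

lemma filter_BC (n : ℕ) :
    ((Finset.range (2 ^ n) ×ˢ Finset.range (2 ^ n)).filter
      (fun p => ((p.1 ^^^ p.2 : ℕ) : ℤ) = (p.1 : ℤ) - (p.2 : ℤ) ∧
        ((p.1 ^^^ p.2 : ℕ) : ℤ) = (p.2 : ℤ) - (p.1 : ℤ))).card = 2 ^ n := by
  have he : ∀ p : ℕ × ℕ, (((p.1 ^^^ p.2 : ℕ) : ℤ) = (p.1 : ℤ) - (p.2 : ℤ) ∧
      ((p.1 ^^^ p.2 : ℕ) : ℤ) = (p.2 : ℤ) - (p.1 : ℤ)) ↔ p.1 = p.2 := by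
    rintro ⟨x, y⟩
    constructor
    · rintro ⟨h1, h2⟩; omega
    · rintro h; simp only at h; subst h; simp
  rw [filter_congr (fun p _ => he p)]
  have : (Finset.range (2 ^ n) ×ˢ Finset.range (2 ^ n)).filter (fun p => p.1 = p.2)
      = (Finset.range (2 ^ n)).diag := by
    ext ⟨x, y⟩
    simp only [mem_filter, mem_product, mem_range, Finset.mem_diag]
    constructor
    · rintro ⟨⟨hx, hy⟩, h⟩; exact ⟨by simpa using hx, h⟩
    · rintro ⟨hx, h⟩; exact ⟨⟨hx, h ▸ hx⟩, h⟩
  rw [this, Finset.diag_card, card_range]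

lemma filter_ABC (n : ℕ) :
    ((Finset.range (2 ^ n) ×ˢ Finset.range (2 ^ n)).filter
      (fun p => ((p.1 ^^^ p.2 = p.1 + p.2) ∧
        ((p.1 ^^^ p.2 : ℕ) : ℤ) = (p.2 : ℤ) - (p.1 : ℤ)) ∧
        (((p.1 ^^^ p.2 : ℕ) : ℤ) = (p.1 : ℤ) - (p.2 : ℤ) ∧
        ((p.1 ^^^ p.2 : ℕ) : ℤ) = (p.2 : ℤ) - (p.1 : ℤ)))).card = 1 := by
  have : (Finset.range (2 ^ n) ×ˢ Finset.range (2 ^ n)).filter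
      (fun p => ((p.1 ^^^ p.2 = p.1 + p.2) ∧
        ((p.1 ^^^ p.2 : ℕ) : ℤ) = (p.2 : ℤ) - (p.1 : ℤ)) ∧
        (((p.1 ^^^ p.2 : ℕ) : ℤ) = (p.1 : ℤ) - (p.2 : ℤ) ∧
        ((p.1 ^^^ p.2 : ℕ) : ℤ) = (p.2 : ℤ) - (p.1 : ℤ))) = {(0, 0)} := by
    ext ⟨x, y⟩
    simp only [mem_filter, mem_product, mem_range, mem_singleton, Prod.mk.injEq]
    constructor
    · rintro ⟨_, ⟨h1, h2⟩, h3, h4⟩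
      omega
    · rintro ⟨hx, hy⟩
      subst hx; subst hy
      refine ⟨⟨Nat.pow_pos (by norm_num), Nat.pow_pos (by norm_num)⟩, ?_⟩
      simp
  rw [this, card_singleton]

theorem card_xor_union (n : ℕ) :
    ((Finset.range (2 ^ n) ×ˢ Finset.range (2 ^ n)).filter
      (fun p => p.1 ^^^ p.2 = p.1 + p.2 ∨
        ((p.1 ^^^ p.2 : ℕ) : ℤ) = (p.1 : ℤ) - (p.2 : ℤ) ∨
        ((p.1 ^^^ p.2 : ℕ) : ℤ) = (p.2 : ℤ) - (p.1 : ℤ))).card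
      = 3 * 3 ^ n - 3 * 2 ^ n + 1 := by
  classical
  have hle : 2 ^ n ≤ 3 ^ n := Nat.pow_le_pow_left (by norm_num) n
  have hpos : 1 ≤ 2 ^ n := Nat.one_le_two_pow
  set R := Finset.range (2 ^ n) ×ˢ Finset.range (2 ^ n) with hR
  have hsplit : R.filter
      (fun p => p.1 ^^^ p.2 = p.1 + p.2 ∨
        ((p.1 ^^^ p.2 : ℕ) : ℤ) = (p.1 : ℤ) - (p.2 : ℤ) ∨
        ((p.1 ^^^ p.2 : ℕ) : ℤ) = (p.2 : ℤ) - (p.1 : ℤ))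
      = (R.filter (fun p => p.1 ^^^ p.2 = p.1 + p.2) ∪
          R.filter (fun p => ((p.1 ^^^ p.2 : ℕ) : ℤ) = (p.1 : ℤ) - (p.2 : ℤ))) ∪
        R.filter (fun p => ((p.1 ^^^ p.2 : ℕ) : ℤ) = (p.2 : ℤ) - (p.1 : ℤ)) := by
    rw [filter_or, filter_or, union_assoc]
  rw [hsplit]
  set FA := R.filter (fun p => p.1 ^^^ p.2 = p.1 + p.2) with hFA
  set FB := R.filter (fun p => ((p.1 ^^^ p.2 : ℕ) : ℤ) = (p.1 : ℤ) - (p.2 : ℤ)) with hFB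
  set FC := R.filter (fun p => ((p.1 ^^^ p.2 : ℕ) : ℤ) = (p.2 : ℤ) - (p.1 : ℤ)) with hFC
  have h1 := card_union_add_card_inter FA FB
  have h2 := card_union_add_card_inter (FA ∪ FB) FC
  have h3 : (FA ∪ FB) ∩ FC = (FA ∩ FC) ∪ (FB ∩ FC) := union_inter_distrib_right _ _ _
  have h4 := card_union_add_card_inter (FA ∩ FC) (FB ∩ FC)
  rw [h3] at h2
  have hABc : (FA ∩ FB).card = 2 ^ n := by
    rw [hFA, hFB, ← filter_and]; exact filter_AB n
  have hACc : (FA ∩ FC).card = 2 ^ n := by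
    rw [hFA, hFC, ← filter_and]; exact filter_AC n
  have hBCc : (FB ∩ FC).card = 2 ^ n := by
    rw [hFB, hFC, ← filter_and]; exact filter_BC n
  have hTc : ((FA ∩ FC) ∩ (FB ∩ FC)).card = 1 := by
    rw [hFA, hFB, hFC, ← filter_and, ← filter_and, ← filter_and]; exact filter_ABC n
  have hAc : FA.card = 3 ^ n := by
    have := card_SA n; rw [SA] at this; exact this
  have hBc : FB.card = 3 ^ n := card_B n
  have hCc : FC.card = 3 ^ n := card_C n
  omega
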